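/- arXiv:1106.2837 — 3 statements merged into one kernel-verified Lean document; each statement's English description precedes it below -/
import Mathlib

section
/- For any natural number m, the number of indices n with 0 ≤ n ≤ m such that the binomial coefficient C(m, n) is odd equals 2^{N(m)}, where N(m) is the number of ones in the binary representation of m. -/
lemma odd_choose_bit (a b n : ℕ) (hb : b < 2) :
    Odd ((2 * a + b).choose n) ↔ Odd (a.choose (n / 2)) ∧ n % 2 ≤ b := by
  have h := @Choose.choose_modEq_choose_mod_mul_choose_div_nat (2 * a + b) n 2 ⟨Nat.prime_two⟩
  have h1 : (2 * a + b) % 2 = b := by omega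
  have h2 : (2 * a + b) / 2 = a := by omega
  rw [h1, h2] at h
  rw [Nat.ModEq] at h
  rw [Nat.odd_iff, Nat.odd_iff, h, Nat.mul_mod]
  have hn : n % 2 = 0 ∨ n % 2 = 1 := by omega
  interval_cases b <;> rcases hn with hn | hn <;> simp [hn]

lemma inj2 : Function.Injective (fun k : ℕ => 2 * k) := fun x y h => by
  simp only [] at h; omega

lemma inj2' : Function.Injective (fun k : ℕ => 2 * k + 1) := fun x y h => by
  simp only [] at h; omega

lemma card_even (a : ℕ) :
    ((Finset.range (2 * a + 1)).filter (fun n => Odd (Nat.choose (2 * a) n))).card =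
      ((Finset.range (a + 1)).filter (fun n => Odd (Nat.choose a n))).card := by
  set F := (Finset.range (a + 1)).filter (fun n => Odd (Nat.choose a n)) with hF
  have key : (Finset.range (2 * a + 1)).filter (fun n => Odd (Nat.choose (2 * a) n)) =
      F.image (fun k => 2 * k) := by
    ext n
    simp only [Finset.mem_image, hF, Finset.mem_filter, Finset.mem_range]
    constructor
    · rintro ⟨hn, ho⟩
      rw [show (2 * a : ℕ) = 2 * a + 0 from rfl, odd_choose_bit a 0 n (by norm_num)] at ho
      obtain ⟨ho, hp⟩ := ho
      exact ⟨n / 2, ⟨by omega, ho⟩, by omega⟩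
    · rintro ⟨k, ⟨hk, ho⟩, rfl⟩
      refine ⟨by omega, ?_⟩
      rw [show (2 * a : ℕ) = 2 * a + 0 from rfl, odd_choose_bit a 0 (2 * k) (by norm_num)]
      refine ⟨?_, by omega⟩
      rw [show 2 * k / 2 = k by omega]; exact ho
  rw [key, Finset.card_image_of_injective _ inj2]

lemma card_odd (a : ℕ) :
    ((Finset.range (2 * a + 1 + 1)).filter (fun n => Odd (Nat.choose (2 * a + 1) n))).card =
      2 * ((Finset.range (a + 1)).filter (fun n => Odd (Nat.choose a n))).card := by
  set F := (Finset.range (a + 1)).filter (fun n => Odd (Nat.choose a n)) with hF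
  have key : (Finset.range (2 * a + 1 + 1)).filter (fun n => Odd (Nat.choose (2 * a + 1) n)) =
      F.image (fun k => 2 * k) ∪ F.image (fun k => 2 * k + 1) := by
    ext n
    simp only [Finset.mem_union, Finset.mem_image, hF, Finset.mem_filter, Finset.mem_range]
    constructor
    · rintro ⟨hn, ho⟩
      rw [odd_choose_bit a 1 n (by norm_num)] at ho
      obtain ⟨ho, -⟩ := ho
      rcases Nat.even_or_odd n with he | he
      · rw [Nat.even_iff] at he
        exact Or.inl ⟨n / 2, ⟨by omega, ho⟩, by omega⟩
      · rw [Nat.odd_iff] at he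
        exact Or.inr ⟨n / 2, ⟨by omega, ho⟩, by omega⟩
    · rintro (⟨k, ⟨hk, ho⟩, rfl⟩ | ⟨k, ⟨hk, ho⟩, rfl⟩) <;>
      · refine ⟨by omega, ?_⟩
        rw [odd_choose_bit a 1 _ (by norm_num)]
        refine ⟨?_, by omega⟩
        first
          | (rw [show 2 * k / 2 = k by omega]; exact ho)
          | (rw [show (2 * k + 1) / 2 = k by omega]; exact ho)
  rw [key, Finset.card_union_of_disjoint, Finset.card_image_of_injective _ inj2,
    Finset.card_image_of_injective _ inj2', two_mul]
  simp only [Finset.disjoint_left, Finset.mem_image]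
  rintro x ⟨k, _, rfl⟩ ⟨l, _, h⟩
  omega

/-- The number of `n` with `0 ≤ n ≤ m` such that `C(m, n)` is odd equals `2 ^ N(m)`,
where `N(m)` is the number of ones in the binary representation of `m`. -/
theorem stmt2 (m : ℕ) :
    ((Finset.range (m + 1)).filter (fun n => Odd (Nat.choose m n))).card =
      2 ^ ((Nat.digits 2 m).count 1) := by
  induction m using Nat.strong_induction_on with
  | _ m ih =>
    rcases Nat.eq_zero_or_pos m with rfl | hm
    · norm_num [Finset.filter_singleton]
    rcases Nat.even_or_odd m with he | he
    · obtain ⟨a, rfl⟩ : ∃ a, m = 2 * a :=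
        ⟨m / 2, by rw [Nat.even_iff] at he; omega⟩
      have hd : Nat.digits 2 (2 * a) = 0 :: Nat.digits 2 a := by
        rw [Nat.digits_def' (by norm_num) hm, show 2 * a % 2 = 0 by omega,
          show 2 * a / 2 = a by omega]
      rw [card_even, ih a (by omega), hd]
      simp
    · obtain ⟨a, rfl⟩ : ∃ a, m = 2 * a + 1 :=
        ⟨m / 2, by rw [Nat.odd_iff] at he; omega⟩
      have hd : Nat.digits 2 (2 * a + 1) = 1 :: Nat.digits 2 a := by
        rw [Nat.digits_def' (by norm_num) hm, show (2 * a + 1) % 2 = 1 by omega,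
          show (2 * a + 1) / 2 = a by omega]
      rw [card_odd, ih a (by omega), hd, List.count_cons]
      simp [pow_succ, mul_comm]
end

section
/- Let (A_m) be a sequence of d×d complex matrices each with operator norm at most 1. If ∑_{m≥1} (d - ‖A_m‖_{HS}²) < ∞ where ‖·‖_{HS} is the Hilbert–Schmidt norm, then the limit lim_{m→∞} lim_{n→∞} |det(A_n A_{n-1} ⋯ A_m)| exists and is strictly positive; conversely, if that iterated limit is strictly positive then ∑_{m≥1}(d - ‖A_m‖_{HS}²) < ∞. -/
open Matrix Filter

/-- The product `A_n * A_{n-1} * ⋯ * A_m` of a sequence of `d × d` matrices. -/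
noncomputable def matProdDesc {d : ℕ} (A : ℕ → Matrix (Fin d) (Fin d) ℂ) (m n : ℕ) :
    Matrix (Fin d) (Fin d) ℂ :=
  (((List.range' m (n + 1 - m)).reverse).map A).prod

lemma list_range'_prod (g : ℕ → ℝ) :
    ∀ c m, ((List.range' m c).map g).prod = ∏ k ∈ Finset.Ico m (m + c), g k := by
  intro c
  induction c with
  | zero => simp
  | succ c ih =>
    intro m
    rw [List.range'_succ, List.map_cons, List.prod_cons, ih (m+1),
      Finset.prod_eq_prod_Ico_succ_bot (by omega : m < m + (c+1))]
    congr 1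
    rw [show m + (c+1) = (m+1) + c by omega]

lemma weier {ι : Type*} [DecidableEq ι] (s : Finset ι) (x : ι → ℝ) (h0 : ∀ i ∈ s, 0 ≤ x i)
    (h1 : ∀ i ∈ s, x i ≤ 1) : 1 - ∑ i ∈ s, (1 - x i) ≤ ∏ i ∈ s, x i := by
  induction s using Finset.induction with
  | empty => simp
  | @insert a s ha ih =>
    rw [Finset.sum_insert ha, Finset.prod_insert ha]
    have hS0 : 0 ≤ ∑ i ∈ s, (1 - x i) :=
      Finset.sum_nonneg fun i hi => by linarith [h1 i (Finset.mem_insert_of_mem hi)]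
    have hP : 1 - ∑ i ∈ s, (1 - x i) ≤ ∏ i ∈ s, x i :=
      ih (fun i hi => h0 i (Finset.mem_insert_of_mem hi))
        (fun i hi => h1 i (Finset.mem_insert_of_mem hi))
    have hP1 : ∏ i ∈ s, x i ≤ 1 :=
      Finset.prod_le_one (fun i hi => h0 i (Finset.mem_insert_of_mem hi))
        (fun i hi => h1 i (Finset.mem_insert_of_mem hi))
    have hP0 : 0 ≤ ∏ i ∈ s, x i :=
      Finset.prod_nonneg fun i hi => h0 i (Finset.mem_insert_of_mem hi)
    have hxa0 := h0 a (Finset.mem_insert_self a s)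
    have hxa1 := h1 a (Finset.mem_insert_self a s)
    nlinarith

lemma abs_det_matProdDesc {d : ℕ} (A : ℕ → Matrix (Fin d) (Fin d) ℂ) (m n : ℕ) :
    ‖(matProdDesc A m n).det‖
      = ∏ k ∈ Finset.Ico m (n+1), ‖(A k).det‖ := by
  unfold matProdDesc
  rw [← Matrix.coe_detMonoidHom, MonoidHom.map_list_prod, ← normHom_apply, map_list_prod normHom,
    List.map_map, List.map_map, List.map_reverse, List.prod_reverse]
  rw [list_range'_prod ((⇑normHom ∘ ⇑Matrix.detMonoidHom) ∘ A) (n + 1 - m) m]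
  have : Finset.Ico m (m + (n + 1 - m)) = Finset.Ico m (n + 1) := by
    ext k; simp only [Finset.mem_Ico]; omega
  rw [this]
  rfl

set_option maxHeartbeats 1000000 in
set_option synthInstance.maxHeartbeats 400000 in
lemma eig_le_one {d : ℕ} (A : Matrix (Fin d) (Fin d) ℂ)
    (hA : ‖Matrix.toEuclideanCLM (𝕜 := ℂ) A‖ ≤ 1)
    (hH : (Aᴴ * A).IsHermitian) (i : Fin d) : hH.eigenvalues i ≤ 1 := by
  have hv : ‖hH.eigenvectorBasis i‖ = 1 := hH.eigenvectorBasis.orthonormal.1 i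
  have hm := hH.mulVec_eigenvectorBasis i
  have hstar : Matrix.toEuclideanCLM (𝕜 := ℂ) Aᴴ = star (Matrix.toEuclideanCLM (𝕜 := ℂ) A) :=
    map_star (Matrix.toEuclideanCLM (𝕜 := ℂ)) A
  have hmulT : Matrix.toEuclideanCLM (𝕜 := ℂ) (Aᴴ * A) =
      Matrix.toEuclideanCLM (𝕜 := ℂ) Aᴴ * Matrix.toEuclideanCLM (𝕜 := ℂ) A := map_mul _ _ _
  have hTnorm : ‖Matrix.toEuclideanCLM (𝕜 := ℂ) (Aᴴ * A)‖ ≤ 1 := by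
    rw [hmulT, hstar]
    calc ‖star (Matrix.toEuclideanCLM (𝕜 := ℂ) A) * Matrix.toEuclideanCLM (𝕜 := ℂ) A‖
        ≤ ‖star (Matrix.toEuclideanCLM (𝕜 := ℂ) A)‖ * ‖Matrix.toEuclideanCLM (𝕜 := ℂ) A‖ :=
          norm_mul_le _ _
      _ = ‖Matrix.toEuclideanCLM (𝕜 := ℂ) A‖ * ‖Matrix.toEuclideanCLM (𝕜 := ℂ) A‖ := by
          simp only [ContinuousLinearMap.star_eq_adjoint, LinearIsometryEquiv.norm_map]
      _ ≤ 1 := by nlinarith [norm_nonneg (Matrix.toEuclideanCLM (𝕜 := ℂ) A)]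
  have happ : Matrix.toEuclideanCLM (𝕜 := ℂ) (Aᴴ * A) (hH.eigenvectorBasis i)
      = hH.eigenvalues i • hH.eigenvectorBasis i := by
    apply WithLp.ofLp_injective
    rw [Matrix.ofLp_toEuclideanCLM, hm]
    simp
  have hnorm : ‖Matrix.toEuclideanCLM (𝕜 := ℂ) (Aᴴ * A) (hH.eigenvectorBasis i)‖
      = |hH.eigenvalues i| := by
    rw [happ, norm_smul, hv, mul_one, Real.norm_eq_abs]
  have hle : |hH.eigenvalues i| ≤ 1 := by
    rw [← hnorm]
    calc ‖Matrix.toEuclideanCLM (𝕜 := ℂ) (Aᴴ * A) (hH.eigenvectorBasis i)‖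
        ≤ ‖Matrix.toEuclideanCLM (𝕜 := ℂ) (Aᴴ * A)‖ * ‖hH.eigenvectorBasis i‖ :=
          ContinuousLinearMap.le_opNorm _ _
      _ ≤ 1 := by rw [hv, mul_one]; exact hTnorm
  exact (le_abs_self _).trans hle

open scoped ComplexOrder in
lemma key_ineq {d : ℕ} (A : Matrix (Fin d) (Fin d) ℂ)
    (hA : ‖Matrix.toEuclideanCLM (𝕜 := ℂ) A‖ ≤ 1) :
    ‖A.det‖ ≤ 1 ∧
    1 - ‖A.det‖ ≤ (d : ℝ) - (Matrix.trace (Aᴴ * A)).re ∧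
    (d : ℝ) - (Matrix.trace (Aᴴ * A)).re ≤ 2 * d * (1 - ‖A.det‖) := by
  have hH : (Aᴴ * A).IsHermitian := (Matrix.posSemidef_conjTranspose_mul_self A).1
  set lam := hH.eigenvalues with hlam
  have h0 : ∀ i, 0 ≤ lam i := fun i =>
    (Matrix.posSemidef_conjTranspose_mul_self A).eigenvalues_nonneg i
  have h1 : ∀ i, lam i ≤ 1 := fun i => eig_le_one A hA hH i
  -- trace
  have htrC : Matrix.trace (Aᴴ * A) = ∑ i, (lam i : ℂ) := by
    conv_lhs => rw [hH.spectral_theorem]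
    rw [Unitary.conjStarAlgAut_apply, Matrix.trace_mul_cycle,
      (Matrix.mem_unitaryGroup_iff').mp (hH.eigenvectorUnitary).2, one_mul,
      Matrix.trace_diagonal]
    rfl
  have htr : (Matrix.trace (Aᴴ * A)).re = ∑ i, lam i := by rw [htrC]; simp
  -- determinant
  set a := ‖A.det‖ with ha
  have ha0 : 0 ≤ a := norm_nonneg _
  have hdet : a ^ 2 = ∏ i, lam i := by
    have h1' : star A.det * A.det = (∏ i, (lam i : ℂ)) := by
      rw [← Matrix.det_conjTranspose, ← Matrix.det_mul]
      exact hH.det_eq_prod_eigenvalues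
    have h3 : ((Complex.normSq A.det : ℝ) : ℂ) = ((∏ i, lam i : ℝ) : ℂ) := by
      rw [← Complex.mul_conj]
      push_cast
      rw [mul_comm]
      exact h1'
    rw [ha, Complex.sq_norm]
    exact_mod_cast h3
  have hprod01 : 0 ≤ ∏ i, lam i := Finset.prod_nonneg fun i _ => h0 i
  have hprod1 : ∏ i, lam i ≤ 1 := Finset.prod_le_one (fun i _ => h0 i) (fun i _ => h1 i)
  have ha1 : a ≤ 1 := by nlinarith
  have hdcard : (d : ℝ) - ∑ i, lam i = ∑ i : Fin d, (1 - lam i) := by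
    rw [Finset.sum_sub_distrib, Finset.sum_const, Finset.card_univ, Fintype.card_fin]
    simp
  refine ⟨ha1, ?_, ?_⟩
  · -- 1 - a ≤ d - trace.re
    have hw : 1 - ∑ i : Fin d, (1 - lam i) ≤ ∏ i, lam i :=
      weier Finset.univ lam (fun i _ => h0 i) (fun i _ => h1 i)
    rw [htr, hdcard]
    nlinarith
  · -- d - trace.re ≤ 2d(1-a)
    have hterm : ∀ i : Fin d, 1 - lam i ≤ 1 - ∏ j, lam j := by
      intro i
      have hprod_le : ∏ j, lam j ≤ lam i := by
        rw [← Finset.mul_prod_erase Finset.univ lam (Finset.mem_univ i)]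
        have h' : ∏ j ∈ Finset.univ.erase i, lam j ≤ 1 :=
          Finset.prod_le_one (fun j _ => h0 j) (fun j _ => h1 j)
        have h'' : 0 ≤ ∏ j ∈ Finset.univ.erase i, lam j :=
          Finset.prod_nonneg fun j _ => h0 j
        nlinarith [h0 i]
      linarith
    have hsum : ∑ i : Fin d, (1 - lam i) ≤ (d : ℝ) * (1 - ∏ j, lam j) := by
      calc ∑ i : Fin d, (1 - lam i) ≤ ∑ _i : Fin d, (1 - ∏ j, lam j) :=
            Finset.sum_le_sum fun i _ => hterm i
        _ = (d : ℝ) * (1 - ∏ j, lam j) := by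
            rw [Finset.sum_const, Finset.card_univ, Fintype.card_fin, nsmul_eq_mul]
    rw [htr, hdcard]
    have hd0 : (0:ℝ) ≤ d := Nat.cast_nonneg d
    nlinarith [mul_nonneg (mul_nonneg hd0 (sub_nonneg.2 ha1)) (sub_nonneg.2 ha1)]

set_option maxHeartbeats 2000000 in
set_option synthInstance.maxHeartbeats 400000 in
/-- Let `(A_m)` be `d × d` complex matrices of operator norm at most `1`.  Then
`∑_m (d - ‖A_m‖_HS²) < ∞` if and only if the iterated limit
`lim_m lim_n |det (A_n ⋯ A_m)|` exists and is strictly positive. -/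
theorem stmt8 (d : ℕ) (A : ℕ → Matrix (Fin d) (Fin d) ℂ)
    (hA : ∀ m, ‖Matrix.toEuclideanCLM (𝕜 := ℂ) (A m)‖ ≤ 1) :
    Summable (fun m => (d : ℝ) - (Matrix.trace ((A m)ᴴ * A m)).re) ↔
      ∃ f : ℕ → ℝ,
        (∀ m, Tendsto (fun n => ‖(matProdDesc A m n).det‖) atTop (nhds (f m))) ∧
        ∃ L : ℝ, 0 < L ∧ Tendsto f atTop (nhds L) := by
  set a : ℕ → ℝ := fun k => ‖(A k).det‖ with ha_def
  have hkey := fun k => key_ineq (A k) (hA k)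
  have ha0 : ∀ k, 0 ≤ a k := fun k => norm_nonneg _
  have ha1 : ∀ k, a k ≤ 1 := fun k => (hkey k).1
  set P : ℕ → ℕ → ℝ := fun m n => ∏ k ∈ Finset.Ico m (n+1), a k with hP_def
  have hPdet : ∀ m n, ‖(matProdDesc A m n).det‖ = P m n := fun m n =>
    abs_det_matProdDesc A m n
  have hP0 : ∀ m n, 0 ≤ P m n := fun m n => Finset.prod_nonneg fun k _ => ha0 k
  have hP1 : ∀ m n, P m n ≤ 1 := fun m n =>
    Finset.prod_le_one (fun k _ => ha0 k) (fun k _ => ha1 k)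
  have hPanti : ∀ m, Antitone (P m) := by
    intro m n n' h
    by_cases hmn : m ≤ n + 1
    · have heq : P m n * ∏ k ∈ Finset.Ico (n+1) (n'+1), a k = P m n' :=
        Finset.prod_Ico_consecutive _ hmn (by omega)
      rw [← heq]
      exact mul_le_of_le_one_right (hP0 m n)
        (Finset.prod_le_one (fun k _ => ha0 k) (fun k _ => ha1 k))
    · have : P m n = 1 := by
        rw [hP_def]
        simp only
        rw [Finset.Ico_eq_empty (by omega), Finset.prod_empty]
      rw [this]
      exact hP1 m n'
  have hPmono : ∀ n m m', m ≤ m' → P m n ≤ P m' n := by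
    intro n m m' h
    by_cases hmn : m' ≤ n + 1
    · have heq : (∏ k ∈ Finset.Ico m m', a k) * P m' n = P m n :=
        Finset.prod_Ico_consecutive _ h hmn
      rw [← heq]
      exact mul_le_of_le_one_left (hP0 m' n)
        (Finset.prod_le_one (fun k _ => ha0 k) (fun k _ => ha1 k))
    · have : P m' n = 1 := by
        rw [hP_def]
        simp only
        rw [Finset.Ico_eq_empty (by omega), Finset.prod_empty]
      rw [this]
      exact hP1 m n
  set f : ℕ → ℝ := fun m => ⨅ n, P m n with hf_def
  have hbdd : ∀ m, BddBelow (Set.range (P m)) := fun m =>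
    ⟨0, fun x ⟨n, hn⟩ => hn ▸ hP0 m n⟩
  have hfle : ∀ m n, f m ≤ P m n := fun m n => ciInf_le (hbdd m) n
  have hf0 : ∀ m, 0 ≤ f m := fun m => le_ciInf fun n => hP0 m n
  have hf1 : ∀ m, f m ≤ 1 := fun m => (hfle m 0).trans (hP1 m 0)
  have htin : ∀ m, Tendsto (P m) atTop (nhds (f m)) := fun m =>
    tendsto_atTop_ciInf (hPanti m) (hbdd m)
  have htin' : ∀ m, Tendsto (fun n => ‖(matProdDesc A m n).det‖) atTop (nhds (f m)) := by
    intro m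
    have : (fun n => ‖(matProdDesc A m n).det‖) = P m := funext fun n => hPdet m n
    rw [this]
    exact htin m
  have hfmono : Monotone f := fun m m' h => le_ciInf fun n => (hfle m n).trans (hPmono n m m' h)
  have hfbddAbove : BddAbove (Set.range f) := ⟨1, fun x ⟨m, hm⟩ => hm ▸ hf1 m⟩
  have htout : Tendsto f atTop (nhds (⨆ m, f m)) := tendsto_atTop_ciSup hfmono hfbddAbove
  constructor
  · -- forward
    intro hS
    have he : Summable (fun k => 1 - a k) :=
      hS.of_nonneg_of_le (fun k => by linarith [ha1 k]) (fun k => (hkey k).2.1)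
    -- choose M with small tail
    have ht : Tendsto (fun i => ∑' k, (1 - a (k + i))) atTop (nhds 0) :=
      tendsto_sum_nat_add (f := fun k => 1 - a k)
    obtain ⟨M, hM⟩ := (ht.eventually (gt_mem_nhds (show (0:ℝ) < 1/2 by norm_num))).exists
    have heM : Summable (fun k => 1 - a (k + M)) := (summable_nat_add_iff M).2 he
    have hfM : (1:ℝ)/2 ≤ f M := by
      apply le_ciInf
      intro n
      have hsum : ∑ k ∈ Finset.Ico M (n+1), (1 - a k) ≤ ∑' k, (1 - a (k + M)) := by
        rw [Finset.sum_Ico_eq_sum_range]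
        have hcomm : ∀ i, 1 - a (M + i) = (fun k => 1 - a (k + M)) i := by
          intro i; simp [add_comm]
        calc ∑ i ∈ Finset.range (n + 1 - M), (1 - a (M + i))
            = ∑ i ∈ Finset.range (n + 1 - M), (fun k => 1 - a (k + M)) i :=
              Finset.sum_congr rfl fun i _ => hcomm i
          _ ≤ ∑' k, (1 - a (k + M)) :=
              heM.sum_le_tsum _ (fun i _ => by linarith [ha1 (i + M)])
      have hw : 1 - ∑ k ∈ Finset.Ico M (n+1), (1 - a k) ≤ P M n :=
        weier _ a (fun k _ => ha0 k) (fun k _ => ha1 k)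
      have := hM.le
      linarith
    refine ⟨f, htin', ⟨⨆ m, f m, ?_, htout⟩⟩
    calc (0:ℝ) < 1/2 := by norm_num
      _ ≤ f M := hfM
      _ ≤ ⨆ m, f m := le_ciSup hfbddAbove M
  · -- backward
    rintro ⟨g, hg, L, hL, hgL⟩
    have hgf : g = f := funext fun m => tendsto_nhds_unique (hg m) (htin' m)
    subst hgf
    obtain ⟨m0, hm0⟩ := (hgL.eventually (lt_mem_nhds (show L/2 < L by linarith))).exists
    have hc : 0 < f m0 := by linarith
    have hcP : ∀ n, f m0 ≤ P m0 n := hfle m0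
    have hapos : ∀ k, m0 ≤ k → 0 < a k := by
      intro k hk
      rcases (ha0 k).lt_or_eq with h | h
      · exact h
      · exfalso
        have hz : P m0 k = 0 :=
          Finset.prod_eq_zero (Finset.mem_Ico.2 ⟨hk, by omega⟩) h.symm
        have h2 := hcP k
        rw [hz] at h2
        linarith
    have hbound : ∀ N, ∑ j ∈ Finset.range N, (1 - a (j + m0)) ≤ -Real.log (f m0) := by
      intro N
      have h₁ : ∑ j ∈ Finset.range N, (1 - a (j + m0))
          = ∑ k ∈ Finset.Ico m0 (m0 + N), (1 - a k) := by
        rw [Finset.sum_Ico_eq_sum_range]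
        simp only [add_tsub_cancel_left]
        exact Finset.sum_congr rfl fun i _ => by rw [add_comm]
      have hne : ∀ k ∈ Finset.Ico m0 (m0 + N), a k ≠ 0 := fun k hk =>
        (hapos k (Finset.mem_Ico.1 hk).1).ne'
      have h₂ : ∑ k ∈ Finset.Ico m0 (m0 + N), (1 - a k)
          ≤ ∑ k ∈ Finset.Ico m0 (m0 + N), (-Real.log (a k)) := by
        apply Finset.sum_le_sum
        intro k hk
        have hpos := hapos k (Finset.mem_Ico.1 hk).1
        have := Real.log_le_sub_one_of_pos hpos
        linarith
      have h₃ : ∑ k ∈ Finset.Ico m0 (m0 + N), (-Real.log (a k))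
          = -Real.log (∏ k ∈ Finset.Ico m0 (m0 + N), a k) := by
        rw [Real.log_prod hne, Finset.sum_neg_distrib]
      have hge : f m0 ≤ ∏ k ∈ Finset.Ico m0 (m0 + N), a k := by
        cases N with
        | zero => simpa using hf1 m0
        | succ N' => exact hcP (m0 + N')
      have h₄ : Real.log (f m0) ≤ Real.log (∏ k ∈ Finset.Ico m0 (m0 + N), a k) :=
        Real.log_le_log hc hge
      linarith
    have heM : Summable (fun j => 1 - a (j + m0)) :=
      summable_of_sum_range_le (fun j => by linarith [ha1 (j + m0)]) hbound
    have he : Summable (fun k => 1 - a k) := (summable_nat_add_iff m0).1 heM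
    have he2 : Summable (fun k => 2 * (d:ℝ) * (1 - a k)) := he.mul_left _
    exact he2.of_nonneg_of_le
      (fun k => by linarith [(hkey k).2.1, ha1 k]) (fun k => (hkey k).2.2)
end

section
/- Let Γ be a compact abelian group, and for each k ∈ ℕ let G_k = Γ^k with homomorphism φ_k : Γ^{k+1} → Γ^k given by φ_k(g_1, …, g_{k+1}) = (g_1 + g_2, g_2 + g_3, …, g_k + g_{k+1}). Then the projective limit H = { (h^{(k)})_{k∈ℕ} : h^{(k)} ∈ Γ^k, φ_k(h^{(k+1)}) = h^{(k)} } is isomorphic as a topological group to the countable product Γ^ℕ. -/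
/-- The projective limit of the system `G_k = Γ^k` with maps
`φ_k(g_1, …, g_{k+1}) = (g_1 + g_2, …, g_k + g_{k+1})`, as an additive subgroup of
`∏ k, (Fin k → Γ)`. -/
def projLimH (Γ : Type*) [AddCommGroup Γ] : AddSubgroup (∀ k : ℕ, Fin k → Γ) where
  carrier := {h | ∀ (k : ℕ) (i : Fin k), h k i = h (k + 1) i.castSucc + h (k + 1) i.succ}
  zero_mem' := by intro k i; simp
  add_mem' := by
    intro x y hx hy k i
    simp only [Pi.add_apply, hx k i, hy k i]
    abel
  neg_mem' := by
    intro x hx k i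
    simp only [Pi.neg_apply, hx k i]
    abel

section Aux

variable {Γ : Type*} [AddCommGroup Γ]

/-- Downward recursion building level `k+1` from level `k` and the last coordinate `a`. -/
def stepAux (P : ℕ → Γ) (a : Γ) (k : ℕ) : ℕ → Γ
  | 0 => a
  | m + 1 => P (k - (m + 1)) - stepAux P a k m

/-- Extension of a `Fin k`-indexed tuple to `ℕ` by zero. -/
def extP {k : ℕ} (prev : Fin k → Γ) : ℕ → Γ :=
  fun t => if h : t < k then prev ⟨t, h⟩ else 0

/-- Reconstruction of an element of the projective limit from its sequence of
last coordinates. -/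
def recon (f : ℕ → Γ) : ∀ k, Fin k → Γ
  | 0 => fun i => i.elim0
  | k + 1 => fun j => stepAux (extP (recon f k)) (f k) k (k - (j : ℕ))

lemma recon_succ (f : ℕ → Γ) (k : ℕ) (j : Fin (k + 1)) :
    recon f (k + 1) j = stepAux (extP (recon f k)) (f k) k (k - (j : ℕ)) := by
  simp [recon]

lemma recon_last (f : ℕ → Γ) (k : ℕ) : recon f (k + 1) (Fin.last k) = f k := by
  simp [recon_succ, stepAux]

lemma recon_mem (f : ℕ → Γ) (k : ℕ) (i : Fin k) :
    recon f k i = recon f (k + 1) i.castSucc + recon f (k + 1) i.succ := by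
  have hik : (i : ℕ) < k := i.isLt
  rw [recon_succ, recon_succ]
  have h1 : (i.castSucc : ℕ) = (i : ℕ) := rfl
  have h2 : (i.succ : ℕ) = (i : ℕ) + 1 := rfl
  rw [h1, h2]
  have h3 : k - (i : ℕ) = (k - ((i : ℕ) + 1)) + 1 := by omega
  rw [h3]
  have hstep : stepAux (extP (recon f k)) (f k) k ((k - ((i : ℕ) + 1)) + 1)
      = extP (recon f k) (k - ((k - ((i : ℕ) + 1)) + 1))
        - stepAux (extP (recon f k)) (f k) k (k - ((i : ℕ) + 1)) := rfl
  rw [hstep]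
  have h4 : k - (k - ((i : ℕ) + 1) + 1) = (i : ℕ) := by omega
  rw [h4]
  have : extP (recon f k) (i : ℕ) = recon f k i := by
    simp [extP, hik]
  rw [this]
  abel

lemma recon_unique (f : ℕ → Γ) (h : ∀ k, Fin k → Γ)
    (hmem : ∀ (k : ℕ) (i : Fin k), h k i = h (k + 1) i.castSucc + h (k + 1) i.succ)
    (hf : ∀ k, f k = h (k + 1) (Fin.last k)) : ∀ k, recon f k = h k := by
  intro k
  induction k with
  | zero => funext i; exact i.elim0
  | succ k ih =>
    have key : ∀ m, m ≤ k → ∀ (hm : k - m < k + 1),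
        stepAux (extP (h k)) (f k) k m = h (k + 1) ⟨k - m, hm⟩ := by
      intro m
      induction m with
      | zero =>
        intro _ hm
        have : (⟨k - 0, hm⟩ : Fin (k + 1)) = Fin.last k := by
          apply Fin.ext; simp
        rw [this]
        exact hf k
      | succ m ihm =>
        intro hmk hm
        have hlt : k - (m + 1) < k := by omega
        have step : stepAux (extP (h k)) (f k) k (m + 1)
            = extP (h k) (k - (m + 1)) - stepAux (extP (h k)) (f k) k m := rfl
        rw [step, ihm (by omega) (by omega)]
        have hext : extP (h k) (k - (m + 1)) = h k ⟨k - (m + 1), hlt⟩ := by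
          simp [extP, hlt]
        rw [hext, hmem k ⟨k - (m + 1), hlt⟩]
        have hcs : (⟨k - (m + 1), hlt⟩ : Fin k).castSucc = ⟨k - (m + 1), hm⟩ := by
          apply Fin.ext; rfl
        have hsc : (⟨k - (m + 1), hlt⟩ : Fin k).succ = ⟨k - m, by omega⟩ := by
          apply Fin.ext; show k - (m + 1) + 1 = k - m; omega
        rw [hcs, hsc]
        abel
    funext j
    rw [recon_succ, ih]
    have hj : (j : ℕ) ≤ k := by omega
    have h5 : k - (k - (j : ℕ)) = (j : ℕ) := by omega
    rw [key (k - (j : ℕ)) (by omega) (by omega)]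
    congr 1
    apply Fin.ext
    exact h5

variable [TopologicalSpace Γ] [IsTopologicalAddGroup Γ]

lemma recon_continuous : ∀ (k : ℕ) (i : Fin k),
    Continuous (fun f : ℕ → Γ => recon f k i) := by
  intro k
  induction k with
  | zero => intro i; exact i.elim0
  | succ k ih =>
    have haux : ∀ m, Continuous (fun f : ℕ → Γ => stepAux (extP (recon f k)) (f k) k m) := by
      intro m
      induction m with
      | zero => exact continuous_apply k
      | succ m ihm =>
        have h1 : Continuous (fun f : ℕ → Γ => extP (recon f k) (k - (m + 1))) := by
          by_cases hlt : k - (m + 1) < k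
          · have : (fun f : ℕ → Γ => extP (recon f k) (k - (m + 1)))
                = fun f => recon f k ⟨k - (m + 1), hlt⟩ := by
              funext f; simp [extP, hlt]
            rw [this]; exact ih _
          · have : (fun f : ℕ → Γ => extP (recon f k) (k - (m + 1)))
                = fun _ => 0 := by
              funext f; simp [extP, hlt]
            rw [this]; exact continuous_const
        exact h1.sub ihm
    intro i
    simp only [recon_succ]
    exact haux _

end Aux

/-- For a compact abelian group `Γ`, the projective limit of the system `(Γ^k, φ_k)` with
`φ_k(g_1, …, g_{k+1}) = (g_1 + g_2, …, g_k + g_{k+1})` is isomorphic as a topological group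
to the countable product `Γ^ℕ`. -/
theorem stmt14 (Γ : Type*) [AddCommGroup Γ] [TopologicalSpace Γ]
    [IsTopologicalAddGroup Γ] [CompactSpace Γ] :
    ∃ e : projLimH Γ ≃+ (ℕ → Γ), Continuous e ∧ Continuous e.symm := by
  refine ⟨{
    toFun := fun h k => h.1 (k + 1) (Fin.last k)
    invFun := fun f => ⟨recon f, fun k i => recon_mem f k i⟩
    left_inv := ?_
    right_inv := ?_
    map_add' := ?_ }, ?_, ?_⟩
  · intro h
    apply Subtype.ext
    funext k
    exact recon_unique _ h.1 h.2 (fun _ => rfl) k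
  · intro f
    funext k
    exact recon_last f k
  · intro x y
    rfl
  · exact continuous_pi fun k =>
      (continuous_apply (Fin.last k)).comp
        ((continuous_apply (k + 1)).comp continuous_subtype_val)
  · exact Continuous.subtype_mk
      (continuous_pi fun k => continuous_pi fun i => recon_continuous k i) _
end
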